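/- Let $g_n(z) = L_n z + p_n(z)$ be a sequence of special triangular automorphisms of $\mathbb{C}^d$ satisfying: (a) $\|L_{n,m}\| \le c\lambda^{n-m}$ for all $n\ge m$ with $0<\lambda<1$; (b) $(p_n)$ is a bounded sequence of strictly triangular polynomials with vanishing 1-jet at 0. Then there exist $C>0$ and $k\in\mathbb{N}$ such that $|g_{n,0}(z)| \le C\lambda^n(|z| + |z|^k)$ for all $z\in\mathbb{C}^d$ and $n\in\mathbb{N}$. Consequently, the basin of attraction $\{z\in\mathbb{C}^d : g_{n,0}(z)\to 0\}$ is all of $\mathbb{C}^d$. -/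

import Mathlib

/-- The operator norm of a `d × d` complex matrix acting on `ℂ^d` with the max-norm. -/
noncomputable def opN {d : ℕ} (M : Matrix (Fin d) (Fin d) ℂ) : ℝ :=
  ‖LinearMap.toContinuousLinearMap (Matrix.mulVecLin M)‖

/-- `Lprod L m ℓ = L_{m+ℓ-1} ⋯ L_m`, i.e. the transition matrix `L_{m+ℓ, m}`. -/
noncomputable def Lprod {d : ℕ} (L : ℕ → Matrix (Fin d) (Fin d) ℂ) (m : ℕ) :
    ℕ → Matrix (Fin d) (Fin d) ℂ
  | 0 => 1
  | (ℓ + 1) => L (m + ℓ) * Lprod L m ℓ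

/-- The polynomial map representing the composition `g_{n,0} = g_{n-1} ∘ ⋯ ∘ g_0`,
where `g_n` is given by the tuple of polynomials `G n`. -/
noncomputable def compSeq {d : ℕ} (G : ℕ → Fin d → MvPolynomial (Fin d) ℂ) :
    ℕ → Fin d → MvPolynomial (Fin d) ℂ
  | 0 => fun j => MvPolynomial.X j
  | (n + 1) => fun j => MvPolynomial.bind₁ (compSeq G n) (G n j)

open MvPolynomial Matrix Finset

lemma aux_mulVec_norm {d : ℕ} (M : Matrix (Fin d) (Fin d) ℂ) (v : Fin d → ℂ) :
    ‖M.mulVec v‖ ≤ opN M * ‖v‖ := by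
  have := (LinearMap.toContinuousLinearMap (Matrix.mulVecLin M)).le_opNorm v
  simpa [opN] using this

lemma aux_entry {d : ℕ} (M : Matrix (Fin d) (Fin d) ℂ) (i j : Fin d) :
    ‖M i j‖ ≤ opN M := by
  have h1 : M.mulVec (Pi.single j 1) = fun i => M i j := by
    ext i; simp [Matrix.mulVec_single]
  have h2 : ‖M i j‖ ≤ ‖M.mulVec (Pi.single j 1)‖ := by
    rw [h1]; exact norm_le_pi_norm (fun i => M i j) i
  calc ‖M i j‖ ≤ opN M * ‖(Pi.single j 1 : Fin d → ℂ)‖ := h2.trans (aux_mulVec_norm M _)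
    _ = opN M := by rw [Pi.norm_single]; simp

lemma aux_pow_le (t : ℝ) (ht : 0 ≤ t) {a k : ℕ} (h1 : 1 ≤ a) (h2 : a ≤ k) :
    t ^ a ≤ t + t ^ k := by
  rcases le_total t 1 with h | h
  · have : t ^ a ≤ t ^ 1 := pow_le_pow_of_le_one ht h h1
    simpa using this.trans (by nlinarith [pow_nonneg ht k])
  · have : t ^ a ≤ t ^ k := pow_le_pow_right₀ h h2
    nlinarith

lemma aux_add_pow (x y : ℝ) (hx : 0 ≤ x) (hy : 0 ≤ y) (t : ℕ) :
    (x + y) ^ t ≤ 2 ^ t * (x ^ t + y ^ t) := by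
  have h1 : x + y ≤ 2 * max x y := by
    rcases le_total x y with h | h <;> simp [max_eq_right, max_eq_left, h] <;> nlinarith
  calc (x + y) ^ t ≤ (2 * max x y) ^ t := pow_le_pow_left₀ (by positivity) h1 t
    _ = 2 ^ t * (max x y) ^ t := by rw [mul_pow]
    _ ≤ 2 ^ t * (x ^ t + y ^ t) := by
        have hm : (max x y) ^ t ≤ x ^ t + y ^ t := by
          rcases le_total x y with h | h
          · rw [max_eq_right h]; nlinarith [pow_nonneg hx t]
          · rw [max_eq_left h]; nlinarith [pow_nonneg hy t]
        have h2 : (0:ℝ) ≤ 2 ^ t := by positivity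
        nlinarith

lemma aux_tri {d : ℕ} (L : ℕ → Matrix (Fin d) (Fin d) ℂ)
    (h : ∀ n, ∀ i j : Fin d, i < j → L n i j = 0) (m ℓ : ℕ) :
    ∀ i j : Fin d, i < j → Lprod L m ℓ i j = 0 := by
  induction ℓ with
  | zero => intro i j hij; simp [Lprod, Matrix.one_apply, hij.ne]
  | succ ℓ ih =>
    intro i j hij
    show (L (m + ℓ) * Lprod L m ℓ) i j = 0
    rw [Matrix.mul_apply]
    apply Finset.sum_eq_zero
    intro x _
    rcases lt_or_ge i x with hx | hx
    · rw [h _ _ _ hx, zero_mul]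
    · rw [ih x j (lt_of_le_of_lt hx hij), mul_zero]

lemma aux_card {d D : ℕ} (q : MvPolynomial (Fin d) ℂ) (hdeg : q.totalDegree ≤ D) :
    q.support.card ≤ (D + 1) ^ d := by
  have h : q.support.card ≤ (Fintype.piFinset fun _ : Fin d => Finset.range (D + 1)).card := by
    refine Finset.card_le_card_of_injOn (fun m => (m : Fin d → ℕ)) ?_ ?_
    · intro m hm
      rw [Finset.mem_coe, Fintype.mem_piFinset]
      intro i
      rw [Finset.mem_range, Nat.lt_succ_iff]
      calc m i ≤ m.sum fun _ e => e := by
            rcases eq_or_ne (m i) 0 with h0 | h0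
            · simp [h0]
            · have hi : i ∈ m.support := Finsupp.mem_support_iff.2 h0
              simpa [Finsupp.sum] using Finset.single_le_sum (f := fun i => m i)
                (fun _ _ => Nat.zero_le _) hi
        _ ≤ q.totalDegree := MvPolynomial.le_totalDegree hm
        _ ≤ D := hdeg
    · intro a _ b _ hab
      exact DFunLike.coe_injective hab
  simpa using h

lemma aux_eval_bound {d : ℕ} (q : MvPolynomial (Fin d) ℂ) (D : ℕ) (M r : ℝ)
    (hM : 0 ≤ M) (hr : 0 ≤ r) (hdeg : q.totalDegree ≤ D)
    (hsupp : ∀ m ∈ q.support, 2 ≤ m.sum fun _ e => e)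
    (hcoeff : ∀ m, ‖MvPolynomial.coeff m q‖ ≤ M)
    (w : Fin d → ℂ) (hw : ∀ m ∈ q.support, ∀ i : Fin d, m i ≠ 0 → ‖w i‖ ≤ r) :
    ‖MvPolynomial.eval w q‖ ≤ ((D:ℝ) + 1) ^ d * M * (r ^ 2 + r ^ D) := by
  rw [MvPolynomial.eval_eq']
  calc ‖∑ m ∈ q.support, coeff m q * ∏ i, w i ^ m i‖
      ≤ ∑ m ∈ q.support, ‖coeff m q * ∏ i, w i ^ m i‖ := norm_sum_le _ _
    _ ≤ ∑ _m ∈ q.support, M * (r ^ 2 + r ^ D) := by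
        apply Finset.sum_le_sum
        intro m hm
        rw [norm_mul]
        have h1 : ‖∏ i, w i ^ m i‖ ≤ r ^ (m.sum fun _ e => e) := by
          rw [norm_prod]
          have hterm : ∀ i ∈ Finset.univ, ‖w i ^ m i‖ ≤ r ^ m i := by
            intro i _
            rw [norm_pow]
            rcases eq_or_ne (m i) 0 with h0 | h0
            · simp [h0]
            · exact pow_le_pow_left₀ (norm_nonneg _) (hw m hm i h0) _
          calc ∏ i, ‖w i ^ m i‖ ≤ ∏ i, r ^ m i :=
                Finset.prod_le_prod (fun i _ => by positivity) hterm
            _ = r ^ (∑ i, m i) := Finset.prod_pow_eq_pow_sum _ _ _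
            _ = r ^ (m.sum fun _ e => e) := by
                congr 1
                rw [Finsupp.sum_fintype] <;> simp
        have h2 : r ^ (m.sum fun _ e => e) ≤ r ^ 2 + r ^ D := by
          have hub : (m.sum fun _ e => e) ≤ D := (MvPolynomial.le_totalDegree hm).trans hdeg
          have hlb := hsupp m hm
          rcases le_total r 1 with h | h
          · have : r ^ (m.sum fun _ e => e) ≤ r ^ 2 := pow_le_pow_of_le_one hr h hlb
            nlinarith [pow_nonneg hr D]
          · have : r ^ (m.sum fun _ e => e) ≤ r ^ D := pow_le_pow_right₀ h hub
            nlinarith [pow_nonneg hr 2]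
        exact mul_le_mul (hcoeff m) (h1.trans h2) (norm_nonneg _) hM
    _ = (q.support.card : ℝ) * (M * (r ^ 2 + r ^ D)) := by
        rw [Finset.sum_const, nsmul_eq_mul]
    _ ≤ ((D:ℝ) + 1) ^ d * (M * (r ^ 2 + r ^ D)) := by
        have hc := aux_card q hdeg
        have hcast : (q.support.card : ℝ) ≤ ((D:ℝ) + 1) ^ d := by exact_mod_cast hc
        have h0 : (0:ℝ) ≤ M * (r ^ 2 + r ^ D) := by positivity
        nlinarith
    _ = _ := (mul_assoc _ _ _).symm

lemma aux_eval_bind {d : ℕ} (z : Fin d → ℂ) (g : Fin d → MvPolynomial (Fin d) ℂ)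
    (φ : MvPolynomial (Fin d) ℂ) :
    MvPolynomial.eval z (MvPolynomial.bind₁ g φ)
      = MvPolynomial.eval (fun i => MvPolynomial.eval z (g i)) φ :=
  MvPolynomial.eval₂Hom_bind₁ (RingHom.id ℂ) z g φ

lemma aux_voc {d : ℕ} (L : ℕ → Matrix (Fin d) (Fin d) ℂ) (F Q : ℕ → Fin d → ℂ)
    (z : Fin d → ℂ) (h0 : F 0 = z)
    (hrec : ∀ n, F (n + 1) = (L n).mulVec (F n) + Q n) :
    ∀ n, F n = (Lprod L 0 n).mulVec z
      + ∑ m ∈ Finset.range n, (Lprod L (m + 1) (n - 1 - m)).mulVec (Q m) := by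
  intro n
  induction n with
  | zero => simp [Lprod, Matrix.one_mulVec, h0]
  | succ n ih =>
    have hkey : ∀ m, m < n → L n * Lprod L (m + 1) (n - 1 - m)
        = Lprod L (m + 1) (n + 1 - 1 - m) := by
      intro m hm
      have he : n + 1 - 1 - m = (n - 1 - m) + 1 := by omega
      rw [he]
      have he2 : (m + 1) + (n - 1 - m) = n := by omega
      calc L n * Lprod L (m + 1) (n - 1 - m)
          = L ((m + 1) + (n - 1 - m)) * Lprod L (m + 1) (n - 1 - m) := by rw [he2]
        _ = Lprod L (m + 1) ((n - 1 - m) + 1) := rfl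
    have hsum : (L n).mulVec (∑ m ∈ Finset.range n,
          (Lprod L (m + 1) (n - 1 - m)).mulVec (Q m))
        = ∑ m ∈ Finset.range n,
            (L n).mulVec ((Lprod L (m + 1) (n - 1 - m)).mulVec (Q m)) :=
      map_sum ((L n).mulVecLin) _ _
    have h1 : (L n).mulVec ((Lprod L 0 n).mulVec z) = (Lprod L 0 (n + 1)).mulVec z := by
      rw [Matrix.mulVec_mulVec]
      have hx : L n * Lprod L 0 n = Lprod L 0 (n + 1) := by
        have hy : Lprod L 0 (n + 1) = L (0 + n) * Lprod L 0 n := rfl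
        rw [hy, Nat.zero_add]
      rw [hx]
    have h2 : ∀ m ∈ Finset.range n,
        (L n).mulVec ((Lprod L (m + 1) (n - 1 - m)).mulVec (Q m))
          = (Lprod L (m + 1) (n + 1 - 1 - m)).mulVec (Q m) := by
      intro m hm
      rw [Finset.mem_range] at hm
      rw [Matrix.mulVec_mulVec, hkey m hm]
    have h3 : (Lprod L (n + 1) (n + 1 - 1 - n)).mulVec (Q n) = Q n := by
      have he : n + 1 - 1 - n = 0 := by omega
      rw [he]
      show (1 : Matrix (Fin d) (Fin d) ℂ).mulVec (Q n) = Q n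
      rw [Matrix.one_mulVec]
    rw [hrec n, ih, Matrix.mulVec_add, hsum, Finset.sum_congr rfl h2, h1,
      Finset.sum_range_succ, h3]
    abel

set_option maxHeartbeats 1000000 in
theorem stmt17 (d : ℕ) (L : ℕ → Matrix (Fin d) (Fin d) ℂ) (c lam : ℝ)
    (hc : 0 < c) (hlam0 : 0 < lam) (hlam1 : lam < 1)
    (hLtri : ∀ n, ∀ i j : Fin d, i < j → L n i j = 0)
    (hLdiag : ∀ n, ∀ i : Fin d, L n i i ≠ 0)
    (hLnorm : ∀ m ℓ : ℕ, opN (Lprod L m ℓ) ≤ c * lam ^ ℓ)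
    (p : ℕ → Fin d → MvPolynomial (Fin d) ℂ)
    (hpstrict : ∀ n, ∀ j : Fin d, ∀ m ∈ (p n j).support,
      (∀ i : Fin d, j ≤ i → m i = 0) ∧ 2 ≤ m.sum (fun _ e => e))
    (hpbdd : ∃ (D : ℕ) (M : ℝ), ∀ n, ∀ j : Fin d,
      (p n j).totalDegree ≤ D ∧ ∀ m : Fin d →₀ ℕ, ‖MvPolynomial.coeff m (p n j)‖ ≤ M)
    (G : ℕ → Fin d → MvPolynomial (Fin d) ℂ)
    (hG : G = fun n j => (∑ i : Fin d, MvPolynomial.C (L n j i) * MvPolynomial.X i) + p n j) :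
    (∃ C : ℝ, 0 < C ∧ ∃ k : ℕ, ∀ n : ℕ, ∀ z : Fin d → ℂ,
      ‖(fun j => MvPolynomial.eval z (compSeq G n j) : Fin d → ℂ)‖
        ≤ C * lam ^ n * (‖z‖ + ‖z‖ ^ k)) ∧
    ∀ z : Fin d → ℂ,
      Filter.Tendsto (fun n => (fun j => MvPolynomial.eval z (compSeq G n j) : Fin d → ℂ))
        Filter.atTop (nhds 0) := by
  obtain ⟨D₀, M₀, hpDM⟩ := hpbdd
  set D := max D₀ 2 with hDdef
  clear_value D
  have hD2 : 2 ≤ D := hDdef ▸ le_max_right D₀ 2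
  set Mc := max M₀ 0 with hMcdef
  clear_value Mc
  have hMc0 : (0:ℝ) ≤ Mc := hMcdef ▸ le_max_right M₀ 0
  set N : ℝ := ((D:ℝ) + 1) ^ d with hNdef
  clear_value N
  have hN0 : (0:ℝ) ≤ N := by rw [hNdef]; positivity
  -- recursion for the iterates
  have hrec : ∀ n (z : Fin d → ℂ),
      (fun j => MvPolynomial.eval z (compSeq G (n + 1) j))
        = (L n).mulVec (fun j => MvPolynomial.eval z (compSeq G n j))
          + (fun j => MvPolynomial.eval
              (fun i => MvPolynomial.eval z (compSeq G n i)) (p n j)) := by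
    intro n z
    funext j
    show MvPolynomial.eval z (MvPolynomial.bind₁ (compSeq G n) (G n j)) = _
    rw [aux_eval_bind, hG]
    simp [Matrix.mulVec, dotProduct]
  have hform : ∀ (z : Fin d → ℂ) n,
      (fun j => MvPolynomial.eval z (compSeq G n j))
        = (Lprod L 0 n).mulVec z
          + ∑ m ∈ Finset.range n, (Lprod L (m + 1) (n - 1 - m)).mulVec
              (fun j => MvPolynomial.eval
                (fun i => MvPolynomial.eval z (compSeq G m i)) (p m j)) := by
    intro z
    exact aux_voc L (fun n => fun j => MvPolynomial.eval z (compSeq G n j))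
      (fun m => fun j => MvPolynomial.eval
        (fun i => MvPolynomial.eval z (compSeq G m i)) (p m j)) z
      (by funext j; simp [compSeq]) (fun n => hrec n z)
  have hgeom : ∀ n : ℕ, ∑ m ∈ Finset.range n, lam ^ m ≤ (1 - lam)⁻¹ := by
    intro n
    exact sum_le_hasSum _ (fun m _ => by positivity)
      (hasSum_geometric_of_lt_one hlam0.le hlam1)
  -- main induction on the number of controlled coordinates
  have main : ∀ J : ℕ, ∃ C : ℝ, ∃ k : ℕ, 1 ≤ C ∧ 1 ≤ k ∧
      ∀ n (z : Fin d → ℂ), ∀ i : Fin d, (i : ℕ) < J →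
        ‖MvPolynomial.eval z (compSeq G n i)‖ ≤ C * lam ^ n * (‖z‖ + ‖z‖ ^ k) := by
    intro J
    induction J with
    | zero => exact ⟨1, 1, le_refl 1, le_refl 1, fun n z i hi => absurd hi (Nat.not_lt_zero _)⟩
    | succ J IH =>
      obtain ⟨C, k, hC1, hk1, hIH⟩ := IH
      have hC0 : (0:ℝ) < C := lt_of_lt_of_le one_pos hC1
      set K : ℝ := N * Mc * (C ^ 2 + C ^ D) * 2 ^ (D + 2) with hKdef
      clear_value K
      have hCsum : (0:ℝ) ≤ C ^ 2 + C ^ D :=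
        add_nonneg (by positivity) (pow_nonneg hC0.le D)
      have hK0 : (0:ℝ) ≤ K := by
        rw [hKdef]
        exact mul_nonneg (mul_nonneg (mul_nonneg hN0 hMc0) hCsum) (by positivity)
      set k' : ℕ := k * D with hk'def
      clear_value k'
      have hk'1 : 1 ≤ k' := by
        rw [hk'def]
        exact Nat.one_le_iff_ne_zero.2 (Nat.mul_ne_zero (by omega) (by omega))
      -- bound on the nonlinear terms
      have hP : ∀ m (z : Fin d → ℂ), ∀ i' : Fin d, (i' : ℕ) ≤ J →
          ‖MvPolynomial.eval (fun i => MvPolynomial.eval z (compSeq G m i)) (p m i')‖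
            ≤ K * lam ^ (2 * m) * (‖z‖ + ‖z‖ ^ k') := by
        intro m z i' hi'
        have hu : (0:ℝ) ≤ ‖z‖ := norm_nonneg z
        set u := ‖z‖ with hudef
        clear_value u
        set A : ℝ := u + u ^ k with hAdef
        clear_value A
        have hA0 : (0:ℝ) ≤ A := by rw [hAdef]; positivity
        set r : ℝ := C * lam ^ m * A with hrdef
        clear_value r
        have hr0 : (0:ℝ) ≤ r := by
          rw [hrdef]
          exact mul_nonneg (mul_nonneg hC0.le (by positivity)) hA0
        have h1 : ‖MvPolynomial.eval (fun i => MvPolynomial.eval z (compSeq G m i)) (p m i')‖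
            ≤ ((D:ℝ) + 1) ^ d * Mc * (r ^ 2 + r ^ D) := by
          apply aux_eval_bound (p m i') D Mc r hMc0 hr0
          · exact le_trans (hpDM m i').1 (by rw [hDdef]; exact le_max_left _ _)
          · intro mm hmm; exact (hpstrict m i' mm hmm).2
          · intro mm; exact le_trans ((hpDM m i').2 mm) (by rw [hMcdef]; exact le_max_left _ _)
          · intro mm hmm i hi
            have hii : i < i' := by
              by_contra hcon
              exact hi ((hpstrict m i' mm hmm).1 i (le_of_not_gt hcon))
            have hiJ : (i : ℕ) < J := lt_of_lt_of_le hii hi'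
            rw [hrdef, hAdef, hudef]
            exact hIH m z i hiJ
        have hmD : 2 * m ≤ m * D := by
          have := Nat.mul_le_mul_left m hD2
          omega
        have hlampow : (lam ^ m) ^ D ≤ lam ^ (2 * m) := by
          rw [← pow_mul]
          exact pow_le_pow_of_le_one hlam0.le hlam1.le hmD
        have hkD : 2 ≤ k * D := by
          have := Nat.mul_le_mul_left 1 hD2
          have := Nat.mul_le_mul_right D hk1
          omega
        have h2 : r ^ 2 + r ^ D ≤ (C ^ 2 + C ^ D) * lam ^ (2 * m) * (A ^ 2 + A ^ D) := by
          have e1 : r ^ 2 = C ^ 2 * (lam ^ m) ^ 2 * A ^ 2 := by rw [hrdef]; ring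
          have e2 : r ^ D = C ^ D * (lam ^ m) ^ D * A ^ D := by rw [hrdef, mul_pow, mul_pow]
          have l1 : (lam ^ m) ^ 2 ≤ lam ^ (2 * m) := by
            rw [← pow_mul, Nat.mul_comm]
          have hCD : (0:ℝ) ≤ C ^ D := by positivity
          have hC2 : (0:ℝ) ≤ C ^ 2 := by positivity
          have hAD : (0:ℝ) ≤ A ^ D := by positivity
          have hA2 : (0:ℝ) ≤ A ^ 2 := by positivity
          have hl2m : (0:ℝ) ≤ lam ^ (2 * m) := by positivity
          have hlm2 : (0:ℝ) ≤ (lam ^ m) ^ 2 := by positivity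
          have hlmD : (0:ℝ) ≤ (lam ^ m) ^ D := by positivity
          have t1 : C ^ 2 * (lam ^ m) ^ 2 * A ^ 2 ≤ C ^ 2 * lam ^ (2 * m) * A ^ 2 := by
            have := mul_le_mul_of_nonneg_left l1 hC2
            exact mul_le_mul_of_nonneg_right this hA2
          have t2 : C ^ D * (lam ^ m) ^ D * A ^ D ≤ C ^ D * lam ^ (2 * m) * A ^ D := by
            have := mul_le_mul_of_nonneg_left hlampow hCD
            exact mul_le_mul_of_nonneg_right this hAD
          have hcross : (0:ℝ) ≤ C ^ 2 * lam ^ (2 * m) * A ^ D + C ^ D * lam ^ (2 * m) * A ^ 2 := by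
            positivity
          have expand : (C ^ 2 + C ^ D) * lam ^ (2 * m) * (A ^ 2 + A ^ D)
              = C ^ 2 * lam ^ (2 * m) * A ^ 2 + C ^ D * lam ^ (2 * m) * A ^ D
                + (C ^ 2 * lam ^ (2 * m) * A ^ D + C ^ D * lam ^ (2 * m) * A ^ 2) := by ring
          rw [e1, e2, expand]
          linarith [t1, t2, hcross]
        have h3 : A ^ 2 + A ^ D ≤ 2 ^ (D + 2) * (u + u ^ k') := by
          have hB0 : (0:ℝ) ≤ u + u ^ k' := by positivity
          have p1 : u ^ 2 ≤ u + u ^ k' := by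
            rw [hk'def]; exact aux_pow_le u hu (by norm_num) hkD
          have p2 : (u ^ k) ^ 2 ≤ u + u ^ k' := by
            rw [← pow_mul, hk'def]
            exact aux_pow_le u hu (by omega) (Nat.mul_le_mul_left k hD2)
          have p3 : u ^ D ≤ u + u ^ k' := by
            rw [hk'def]
            exact aux_pow_le u hu (by omega) (Nat.le_mul_of_pos_left D (by omega))
          have p4 : (u ^ k) ^ D ≤ u + u ^ k' := by
            rw [← pow_mul, hk'def]
            exact le_add_of_nonneg_left hu
          have hA2 : A ^ 2 ≤ 2 ^ 3 * (u + u ^ k') := by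
            have hap := aux_add_pow u (u ^ k) hu (by positivity) 2
            rw [hAdef]
            nlinarith
          have hAD : A ^ D ≤ 2 ^ (D + 1) * (u + u ^ k') := by
            have hap := aux_add_pow u (u ^ k) hu (by positivity) D
            have h2D : (0:ℝ) < (2:ℝ) ^ D := by positivity
            calc A ^ D = (u + u ^ k) ^ D := by rw [hAdef]
              _ ≤ 2 ^ D * (u ^ D + (u ^ k) ^ D) := hap
              _ ≤ 2 ^ D * ((u + u ^ k') + (u + u ^ k')) := by nlinarith
              _ = 2 ^ (D + 1) * (u + u ^ k') := by rw [pow_succ]; ring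
          have h23 : (2:ℝ) ^ 3 ≤ 2 ^ (D + 1) := by
            apply pow_le_pow_right₀ (by norm_num)
            omega
          have h2D2 : (2:ℝ) ^ (D + 1) + 2 ^ (D + 1) = 2 ^ (D + 2) := by
            rw [pow_succ 2 (D + 1)]; ring
          nlinarith
        calc ‖MvPolynomial.eval (fun i => MvPolynomial.eval z (compSeq G m i)) (p m i')‖
            ≤ ((D:ℝ) + 1) ^ d * Mc * (r ^ 2 + r ^ D) := h1
          _ ≤ ((D:ℝ) + 1) ^ d * Mc
              * ((C ^ 2 + C ^ D) * lam ^ (2 * m) * (A ^ 2 + A ^ D)) :=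
              mul_le_mul_of_nonneg_left h2 (by positivity)
          _ ≤ ((D:ℝ) + 1) ^ d * Mc
              * ((C ^ 2 + C ^ D) * lam ^ (2 * m) * (2 ^ (D + 2) * (u + u ^ k'))) :=
              mul_le_mul_of_nonneg_left
                (mul_le_mul_of_nonneg_left h3 (mul_nonneg hCsum (by positivity)))
                (by positivity)
          _ = K * lam ^ (2 * m) * (u + u ^ k') := by rw [hKdef, hNdef]; ring
      -- the new coordinate
      set c2 : ℝ := c + (d : ℝ) * c * K * (lam⁻¹ * (1 - lam)⁻¹) with hc2def
      clear_value c2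
      have hc20 : (0:ℝ) < c2 := by
        have : (0:ℝ) ≤ (d : ℝ) * c * K * (lam⁻¹ * (1 - lam)⁻¹) := by
          have h1 : (0:ℝ) < lam⁻¹ := by positivity
          have h2 : (0:ℝ) < (1 - lam)⁻¹ := by
            have : (0:ℝ) < 1 - lam := by linarith
            positivity
          positivity
        rw [hc2def]
        linarith
      have hnew : ∀ n (z : Fin d → ℂ), ∀ i : Fin d, (i : ℕ) = J →
          ‖MvPolynomial.eval z (compSeq G n i)‖ ≤ c2 * lam ^ n * (‖z‖ + ‖z‖ ^ k') := by
        intro n z i hiJ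
        have hu : (0:ℝ) ≤ ‖z‖ := norm_nonneg z
        set A' : ℝ := ‖z‖ + ‖z‖ ^ k' with hA'def
        have hA'0 : (0:ℝ) ≤ A' := by positivity
        have hzA' : ‖z‖ ≤ A' := le_add_of_nonneg_right (by positivity)
        have hformi := congrFun (hform z n) i
        simp only [Pi.add_apply, Finset.sum_apply] at hformi
        rw [hformi]
        have hterm1 : ‖(Lprod L 0 n).mulVec z i‖ ≤ c * lam ^ n * ‖z‖ := by
          calc ‖(Lprod L 0 n).mulVec z i‖ ≤ ‖(Lprod L 0 n).mulVec z‖ :=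
                norm_le_pi_norm _ i
            _ ≤ opN (Lprod L 0 n) * ‖z‖ := aux_mulVec_norm _ _
            _ ≤ c * lam ^ n * ‖z‖ := by
                have := hLnorm 0 n
                nlinarith
        have hterm2 : ∀ m ∈ Finset.range n,
            ‖(Lprod L (m + 1) (n - 1 - m)).mulVec
              (fun j => MvPolynomial.eval
                (fun i₀ => MvPolynomial.eval z (compSeq G m i₀)) (p m j)) i‖
              ≤ (d : ℝ) * ((c * lam ^ (n - 1 - m)) * (K * lam ^ (2 * m) * A')) := by
          intro m hm
          set Mm := Lprod L (m + 1) (n - 1 - m) with hMmdef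
          set v : Fin d → ℂ := fun j => MvPolynomial.eval
            (fun i₀ => MvPolynomial.eval z (compSeq G m i₀)) (p m j) with hvdef
          have hMv : Mm.mulVec v i = ∑ i₂ : Fin d, Mm i i₂ * v i₂ := rfl
          rw [hMv]
          calc ‖∑ i₂ : Fin d, Mm i i₂ * v i₂‖
              ≤ ∑ i₂ : Fin d, ‖Mm i i₂ * v i₂‖ := norm_sum_le _ _
            _ ≤ ∑ _i₂ : Fin d, (c * lam ^ (n - 1 - m)) * (K * lam ^ (2 * m) * A') := by
                apply Finset.sum_le_sum
                intro i₂ _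
                rcases lt_or_ge i i₂ with hlt | hle
                · have hz0 : Mm i i₂ = 0 := by
                    rw [hMmdef]; exact aux_tri L hLtri _ _ _ _ hlt
                  rw [hz0]
                  simp only [zero_mul, norm_zero]
                  positivity
                · rw [norm_mul]
                  have hM : ‖Mm i i₂‖ ≤ c * lam ^ (n - 1 - m) :=
                    (aux_entry Mm i i₂).trans (hLnorm (m + 1) (n - 1 - m))
                  have hv : ‖v i₂‖ ≤ K * lam ^ (2 * m) * A' := by
                    apply hP m z i₂
                    calc (i₂ : ℕ) ≤ (i : ℕ) := hle
                      _ = J := hiJ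
                  have h1 : (0:ℝ) ≤ ‖v i₂‖ := norm_nonneg _
                  have h2 : (0:ℝ) ≤ c * lam ^ (n - 1 - m) := by positivity
                  exact mul_le_mul hM hv h1 h2
            _ = (d : ℝ) * ((c * lam ^ (n - 1 - m)) * (K * lam ^ (2 * m) * A')) := by
                rw [Finset.sum_const, nsmul_eq_mul, Finset.card_univ, Fintype.card_fin]
        have hsum2 : ∑ m ∈ Finset.range n,
            ((d : ℝ) * ((c * lam ^ (n - 1 - m)) * (K * lam ^ (2 * m) * A')))
              ≤ (d : ℝ) * c * K * (lam⁻¹ * (1 - lam)⁻¹) * lam ^ n * A' := by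
          have hptwise : ∀ m ∈ Finset.range n,
              (d : ℝ) * ((c * lam ^ (n - 1 - m)) * (K * lam ^ (2 * m) * A'))
                = ((d : ℝ) * c * K * A' * (lam ^ n * lam⁻¹)) * lam ^ m := by
            intro m hm
            rw [Finset.mem_range] at hm
            have he : lam ^ (n - 1 - m) * lam ^ (2 * m) = lam ^ n * lam⁻¹ * lam ^ m := by
              have h1 : lam ^ ((n - 1 - m) + 2 * m) * lam = lam ^ (n + m) := by
                rw [← pow_succ]
                congr 1
                omega
              have h2 : lam ^ (n - 1 - m) * lam ^ (2 * m) = lam ^ ((n - 1 - m) + 2 * m) := by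
                rw [pow_add]
              rw [h2]
              field_simp
              calc lam ^ (n - 1 - m + 2 * m) * lam = lam ^ (n + m) := h1
                _ = lam ^ n * lam ^ m := by rw [pow_add]
            calc (d : ℝ) * ((c * lam ^ (n - 1 - m)) * (K * lam ^ (2 * m) * A'))
                = (d : ℝ) * c * K * A' * (lam ^ (n - 1 - m) * lam ^ (2 * m)) := by ring
              _ = (d : ℝ) * c * K * A' * (lam ^ n * lam⁻¹ * lam ^ m) := by rw [he]
              _ = ((d : ℝ) * c * K * A' * (lam ^ n * lam⁻¹)) * lam ^ m := by ring
          rw [Finset.sum_congr rfl hptwise, ← Finset.mul_sum]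
          have hfac : (0:ℝ) ≤ (d : ℝ) * c * K * A' * (lam ^ n * lam⁻¹) := by positivity
          calc ((d : ℝ) * c * K * A' * (lam ^ n * lam⁻¹)) * ∑ m ∈ Finset.range n, lam ^ m
              ≤ ((d : ℝ) * c * K * A' * (lam ^ n * lam⁻¹)) * (1 - lam)⁻¹ := by
                apply mul_le_mul_of_nonneg_left (hgeom n) hfac
            _ = (d : ℝ) * c * K * (lam⁻¹ * (1 - lam)⁻¹) * lam ^ n * A' := by ring
        calc ‖(Lprod L 0 n).mulVec z i + ∑ m ∈ Finset.range n,
              (Lprod L (m + 1) (n - 1 - m)).mulVec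
                (fun j => MvPolynomial.eval
                  (fun i₀ => MvPolynomial.eval z (compSeq G m i₀)) (p m j)) i‖
            ≤ ‖(Lprod L 0 n).mulVec z i‖ + ‖∑ m ∈ Finset.range n,
              (Lprod L (m + 1) (n - 1 - m)).mulVec
                (fun j => MvPolynomial.eval
                  (fun i₀ => MvPolynomial.eval z (compSeq G m i₀)) (p m j)) i‖ :=
              norm_add_le _ _
          _ ≤ c * lam ^ n * ‖z‖ + ∑ m ∈ Finset.range n,
              ((d : ℝ) * ((c * lam ^ (n - 1 - m)) * (K * lam ^ (2 * m) * A'))) := by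
              have hns := norm_sum_le (Finset.range n)
                (fun m => (Lprod L (m + 1) (n - 1 - m)).mulVec
                  (fun j => MvPolynomial.eval
                    (fun i₀ => MvPolynomial.eval z (compSeq G m i₀)) (p m j)) i)
              have hss := Finset.sum_le_sum hterm2
              exact add_le_add (hterm1.trans (le_refl _)) (hns.trans hss)
          _ ≤ c * lam ^ n * A' + (d : ℝ) * c * K * (lam⁻¹ * (1 - lam)⁻¹) * lam ^ n * A' := by
              have h1 : c * lam ^ n * ‖z‖ ≤ c * lam ^ n * A' := by
                exact mul_le_mul_of_nonneg_left hzA' (by positivity)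
              exact add_le_add h1 hsum2
          _ = c2 * lam ^ n * A' := by rw [hc2def]; ring
      -- combine old and new coordinates
      refine ⟨2 * C + c2 + 1, k', by linarith, hk'1, ?_⟩
      intro n z i hi
      have hu : (0:ℝ) ≤ ‖z‖ := norm_nonneg z
      set A' : ℝ := ‖z‖ + ‖z‖ ^ k' with hA'def
      have hA'0 : (0:ℝ) ≤ A' := by positivity
      have hlamn : (0:ℝ) < lam ^ n := by positivity
      rcases Nat.lt_or_ge (i : ℕ) J with hlt | hge
      · have hb := hIH n z i hlt
        have hAA' : ‖z‖ + ‖z‖ ^ k ≤ 2 * A' := by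
          have : ‖z‖ ^ k ≤ ‖z‖ + ‖z‖ ^ k' :=
            aux_pow_le ‖z‖ hu hk1 (by rw [hk'def]; exact Nat.le_mul_of_pos_right k (by omega))
          rw [hA'def]
          have h0 : (0:ℝ) ≤ ‖z‖ ^ k' := by positivity
          linarith
        calc ‖MvPolynomial.eval z (compSeq G n i)‖ ≤ C * lam ^ n * (‖z‖ + ‖z‖ ^ k) := hb
          _ ≤ C * lam ^ n * (2 * A') :=
              mul_le_mul_of_nonneg_left hAA' (by positivity)
          _ ≤ (2 * C + c2 + 1) * lam ^ n * A' := by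
              nlinarith [mul_nonneg hlamn.le hA'0, hc20]
      · have hiJ : (i : ℕ) = J := by omega
        have hb := hnew n z i hiJ
        calc ‖MvPolynomial.eval z (compSeq G n i)‖ ≤ c2 * lam ^ n * A' := hb
          _ ≤ (2 * C + c2 + 1) * lam ^ n * A' := by
              nlinarith [mul_nonneg hlamn.le hA'0, hC0]
  -- conclude
  obtain ⟨C, k, hC1, hk1, hbound⟩ := main d
  have hC0 : (0:ℝ) < C := lt_of_lt_of_le one_pos hC1
  have hmain : ∀ n (z : Fin d → ℂ),
      ‖(fun j => MvPolynomial.eval z (compSeq G n j) : Fin d → ℂ)‖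
        ≤ C * lam ^ n * (‖z‖ + ‖z‖ ^ k) := by
    intro n z
    have hrhs : (0:ℝ) ≤ C * lam ^ n * (‖z‖ + ‖z‖ ^ k) := by positivity
    rw [pi_norm_le_iff_of_nonneg hrhs]
    intro i
    exact hbound n z i i.isLt
  refine ⟨⟨C, hC0, k, hmain⟩, ?_⟩
  intro z
  rw [tendsto_zero_iff_norm_tendsto_zero]
  have hg : Filter.Tendsto (fun n : ℕ => C * (‖z‖ + ‖z‖ ^ k) * lam ^ n)
      Filter.atTop (nhds 0) := by
    have h := tendsto_pow_atTop_nhds_zero_of_lt_one hlam0.le hlam1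
    simpa using h.const_mul (C * (‖z‖ + ‖z‖ ^ k))
  apply squeeze_zero (fun n => norm_nonneg _) _ hg
  intro n
  calc ‖(fun j => MvPolynomial.eval z (compSeq G n j) : Fin d → ℂ)‖
      ≤ C * lam ^ n * (‖z‖ + ‖z‖ ^ k) := hmain n z
    _ = C * (‖z‖ + ‖z‖ ^ k) * lam ^ n := by ring
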